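/- Let M, γ, d > 0 and set R₀ = √(γ/(π M)); assume R₀ ≤ d. Then for every x ∈ ℝ² and every measurable function f : ℝ² → ℝ with 0 ≤ f ≤ M almost everywhere and ∫_{ℝ²} f = γ, one has ∫_{B(x,d)} ln(d/|x−y|) f(y) dy ≤ γ·(ln(d/R₀) + 1/2). -/

import Mathlib

open MeasureTheory Real Set

noncomputable def lpKer (c r : ℝ) : ℝ := if r < c then Real.log (c / r) else 0

lemma lpKer_nonneg {c r : ℝ} (hr : 0 ≤ r) : 0 ≤ lpKer c r := by
  unfold lpKer
  split_ifs with h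
  · rcases eq_or_lt_of_le hr with h0 | h0
    · simp [← h0]
    · exact Real.log_nonneg ((one_le_div h0).2 h.le)
  · exact le_refl _

lemma mul_log_div_eq (c : ℝ) (hc : c ≠ 0) :
    (fun r : ℝ => r * Real.log (c / r)) = fun r => r * Real.log c - r * Real.log r := by
  funext r
  rcases eq_or_ne r 0 with rfl | hr
  · simp
  · rw [Real.log_div hc hr]; ring

lemma cont_mul_log_div (c : ℝ) (hc : c ≠ 0) :
    Continuous (fun r : ℝ => r * Real.log (c / r)) := by
  rw [mul_log_div_eq c hc]
  exact (continuous_id.mul continuous_const).sub Real.continuous_mul_log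

lemma integral_mul_log_div {c : ℝ} (hc : 0 < c) :
    ∫ r in Ioo 0 c, r * Real.log (c / r) = c ^ 2 / 4 := by
  have hF : ∀ r ∈ Ioo 0 c, HasDerivAt
      (fun r : ℝ => (r ^ 2 * Real.log c - r * (r * Real.log r)) / 2 + r ^ 2 / 4)
      (r * Real.log (c / r)) r := by
    intro r hr
    have hr0 : r ≠ 0 := hr.1.ne'
    have h1 : HasDerivAt (fun r : ℝ => r ^ 2 * Real.log c) (2 * r * Real.log c) r := by
      simpa [mul_comm] using ((hasDerivAt_pow 2 r).mul_const (Real.log c))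
    have h2 : HasDerivAt (fun r : ℝ => r * (r * Real.log r))
        (1 * (r * Real.log r) + r * (Real.log r + 1)) r :=
      (hasDerivAt_id r).mul (Real.hasDerivAt_mul_log hr0)
    have := ((h1.sub h2).div_const 2).add ((hasDerivAt_pow 2 r).div_const 4)
    refine this.congr_deriv ?_
    rw [Real.log_div hc.ne' hr0]
    push_cast
    ring
  have hcont : ContinuousOn
      (fun r : ℝ => (r ^ 2 * Real.log c - r * (r * Real.log r)) / 2 + r ^ 2 / 4) (Icc 0 c) := by
    refine Continuous.continuousOn ?_
    exact ((((continuous_pow 2).mul continuous_const).sub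
      (continuous_id.mul Real.continuous_mul_log)).div_const 2).add ((continuous_pow 2).div_const 4)
  have hint : IntervalIntegrable (fun r : ℝ => r * Real.log (c / r)) volume 0 c :=
    ((cont_mul_log_div c hc.ne').continuousOn).intervalIntegrable_of_Icc hc.le
  have := intervalIntegral.integral_eq_sub_of_hasDerivAt_of_le hc.le hcont hF hint
  rw [intervalIntegral.integral_of_le hc.le, integral_Ioc_eq_integral_Ioo] at this
  rw [this]
  simp
  ring

lemma integrableOn_mul_lpKer {c : ℝ} (hc : 0 < c) :
    IntegrableOn (fun r => r * lpKer c r) (Ioi (0:ℝ)) := by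
  have h1 : IntegrableOn (fun r : ℝ => r * Real.log (c / r)) (Ioo 0 c) :=
    ((cont_mul_log_div c hc.ne').continuousOn).integrableOn_Icc.mono_set Ioo_subset_Icc_self
  have h2 := (h1.integrable_indicator measurableSet_Ioo).integrableOn (s := Ioi (0:ℝ))
  refine h2.congr_fun ?_ measurableSet_Ioi
  intro r hr
  have hr' : (0:ℝ) < r := hr
  by_cases h : r < c
  · simp [lpKer, Set.indicator_apply, mem_Ioo, h, hr']
  · simp [lpKer, Set.indicator_apply, mem_Ioo, h]

lemma integral_mul_lpKer {c : ℝ} (hc : 0 < c) :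
    ∫ r in Ioi (0:ℝ), r * lpKer c r = c ^ 2 / 4 := by
  have heq : EqOn (fun r => r * lpKer c r)
      ((Ioo (0:ℝ) c).indicator (fun r => r * Real.log (c / r))) (Ioi 0) := by
    intro r hr
    have hr' : (0:ℝ) < r := hr
    by_cases h : r < c
    · simp [lpKer, Set.indicator_apply, mem_Ioo, h, hr']
    · simp [lpKer, Set.indicator_apply, mem_Ioo, h]
  rw [setIntegral_congr_fun measurableSet_Ioi heq, setIntegral_indicator measurableSet_Ioo,
    inter_eq_self_of_subset_right Ioo_subset_Ioi_self]
  exact integral_mul_log_div hc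

noncomputable def polarJac : ℝ × ℝ → (ℝ × ℝ) →L[ℝ] (ℝ × ℝ) := fun p =>
  LinearMap.toContinuousLinearMap (Matrix.toLin (Module.Basis.finTwoProd ℝ) (Module.Basis.finTwoProd ℝ)
    !![Real.cos p.2, -p.1 * Real.sin p.2; Real.sin p.2, p.1 * Real.cos p.2])

lemma polarJac_det (p : ℝ × ℝ) : (polarJac p).det = p.1 := by
  conv_rhs => rw [← one_mul p.1, ← sin_sq_add_cos_sq p.2]
  simp only [polarJac, neg_mul, LinearMap.det_toContinuousLinearMap, LinearMap.det_toLin,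
    Matrix.det_fin_two_of, sub_neg_eq_add]
  ring

lemma sqrt_sq_add_sq_polar (r θ : ℝ) (hr : 0 < r) :
    Real.sqrt ((r * Real.cos θ) ^ 2 + (r * Real.sin θ) ^ 2) = r := by
  have : (r * Real.cos θ) ^ 2 + (r * Real.sin θ) ^ 2 = r ^ 2 := by
    have := Real.sin_sq_add_cos_sq θ
    nlinarith
  rw [this, Real.sqrt_sq hr.le]

lemma measure_restrict_Ioo_pi : IsFiniteMeasure (volume.restrict (Ioo (-π) π)) :=
  ⟨by rw [Measure.restrict_apply_univ]; exact measure_Ioo_lt_top⟩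

lemma radial_integrableOn_target (K : ℝ → ℝ)
    (hK : IntegrableOn (fun r => r * K r) (Ioi (0:ℝ))) :
    IntegrableOn (fun p : ℝ × ℝ => p.1 * K p.1) (Ioi (0:ℝ) ×ˢ Ioo (-π) π) := by
  have : IsFiniteMeasure (volume.restrict (Ioo (-π) π)) := measure_restrict_Ioo_pi
  rw [IntegrableOn, Measure.volume_eq_prod, ← Measure.prod_restrict]
  have h1 : Integrable (fun p : ℝ × ℝ => (p.1 * K p.1) * (fun _ : ℝ => (1:ℝ)) p.2)
      ((volume.restrict (Ioi (0:ℝ))).prod (volume.restrict (Ioo (-π) π))) :=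
    Integrable.mul_prod hK (integrable_const 1)
  simpa using h1

lemma radial_integrable (K : ℝ → ℝ)
    (hK : IntegrableOn (fun r => r * K r) (Ioi (0:ℝ))) :
    Integrable (fun p : ℝ × ℝ => K (Real.sqrt (p.1 ^ 2 + p.2 ^ 2))) := by
  set g : ℝ × ℝ → ℝ := fun p => K (Real.sqrt (p.1 ^ 2 + p.2 ^ 2)) with hg
  have hI := integrableOn_image_iff_integrableOn_abs_det_fderiv_smul volume
    polarCoord.open_target.measurableSet
    (fun p _ => (hasFDerivAt_polarCoord_symm p).hasFDerivWithinAt)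
    polarCoord.symm.injOn g
  rw [polarCoord.symm_image_target_eq_source] at hI
  have hsrc : volume.restrict polarCoord.source = volume := by
    rw [Measure.restrict_congr_set polarCoord_source_ae_eq_univ, Measure.restrict_univ]
  have h3 : IntegrableOn (fun p => |(polarJac p).det| • g (polarCoord.symm p))
      polarCoord.target := by
    rw [polarCoord_target]
    refine (radial_integrableOn_target K hK).congr_fun ?_
      (measurableSet_Ioi.prod measurableSet_Ioo)
    rintro ⟨r, θ⟩ hp
    have hr : 0 < r := hp.1
    simp only [smul_eq_mul, polarJac_det, hg, polarCoord_symm_apply]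
    rw [sqrt_sq_add_sq_polar r θ hr, abs_of_pos hr]
  have h4 := hI.2 (by simpa only [polarJac_det, det_fderivPolarCoordSymm] using h3)
  rwa [IntegrableOn, hsrc] at h4

lemma radial_integral (K : ℝ → ℝ) :
    ∫ p : ℝ × ℝ, K (Real.sqrt (p.1 ^ 2 + p.2 ^ 2))
      = (2 * π) * ∫ r in Ioi (0:ℝ), r * K r := by
  rw [← integral_comp_polarCoord_symm (fun p : ℝ × ℝ => K (Real.sqrt (p.1 ^ 2 + p.2 ^ 2)))]
  have heq : EqOn (fun p : ℝ × ℝ => p.1 • K (Real.sqrt ((polarCoord.symm p).1 ^ 2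
      + (polarCoord.symm p).2 ^ 2))) (fun p : ℝ × ℝ => p.1 * K p.1) polarCoord.target := by
    rintro ⟨r, θ⟩ hp
    have hr : 0 < r := hp.1
    simp only [smul_eq_mul, polarCoord_symm_apply]
    rw [sqrt_sq_add_sq_polar r θ hr]
  rw [setIntegral_congr_fun polarCoord.open_target.measurableSet heq]
  have : IsFiniteMeasure (volume.restrict (Ioo (-π) π)) := measure_restrict_Ioo_pi
  rw [polarCoord_target]
  rw [Measure.volume_eq_prod, ← Measure.prod_restrict]
  have h2 := integral_prod_mul (μ := volume.restrict (Ioi (0:ℝ)))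
    (ν := volume.restrict (Ioo (-π) π)) (fun r : ℝ => r * K r) (fun _ : ℝ => (1:ℝ))
  simp only [mul_one] at h2
  rw [h2]
  rw [setIntegral_const]
  rw [measureReal_def, Real.volume_Ioo]
  rw [smul_eq_mul, mul_one, ENNReal.toReal_ofReal (by linarith [Real.pi_pos])]
  ring

section s3
variable (K : ℝ → ℝ)

lemma eucl_comp_eq :
    (fun p : ℝ × ℝ => K (Real.sqrt (p.1 ^ 2 + p.2 ^ 2))) ∘
        (⇑(MeasurableEquiv.finTwoArrow) ∘ ⇑(MeasurableEquiv.toLp 2 (Fin 2 → ℝ)).symm)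
      = fun y : EuclideanSpace ℝ (Fin 2) => K ‖y‖ := by
  funext y
  have hnorm : ‖y‖ = Real.sqrt ((y 0) ^ 2 + (y 1) ^ 2) := by
    rw [EuclideanSpace.norm_eq]
    simp [Fin.sum_univ_two, sq_abs]
  simp only [Function.comp_apply, MeasurableEquiv.finTwoArrow_apply, hnorm]
  rfl

lemma eucl_radial_integrable
    (hK : Integrable (fun p : ℝ × ℝ => K (Real.sqrt (p.1 ^ 2 + p.2 ^ 2)))) :
    Integrable (fun y : EuclideanSpace ℝ (Fin 2) => K ‖y‖) := by
  have h1 : Integrable ((fun p : ℝ × ℝ => K (Real.sqrt (p.1 ^ 2 + p.2 ^ 2))) ∘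
      ⇑(MeasurableEquiv.finTwoArrow)) :=
    ((volume_preserving_finTwoArrow ℝ).integrable_comp_emb
      (MeasurableEquiv.measurableEmbedding _)).2 hK
  have h2 := ((EuclideanSpace.volume_preserving_symm_measurableEquiv_toLp (Fin 2)).integrable_comp_emb
      (MeasurableEquiv.measurableEmbedding _)).2 h1
  rw [Function.comp_assoc] at h2
  rwa [eucl_comp_eq] at h2

lemma eucl_radial_integral :
    ∫ y : EuclideanSpace ℝ (Fin 2), K ‖y‖
      = ∫ p : ℝ × ℝ, K (Real.sqrt (p.1 ^ 2 + p.2 ^ 2)) := by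
  have h1 := (volume_preserving_finTwoArrow ℝ).integral_comp
    (MeasurableEquiv.measurableEmbedding _) (fun p : ℝ × ℝ => K (Real.sqrt (p.1 ^ 2 + p.2 ^ 2)))
  have h2 := (EuclideanSpace.volume_preserving_symm_measurableEquiv_toLp (Fin 2)).integral_comp
    (MeasurableEquiv.measurableEmbedding _)
    (fun v : Fin 2 → ℝ => K (Real.sqrt ((MeasurableEquiv.finTwoArrow v).1 ^ 2
      + (MeasurableEquiv.finTwoArrow v).2 ^ 2)))
  rw [h1] at h2
  rw [← h2]
  have := congrFun (eucl_comp_eq K)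
  simp only [Function.comp_apply] at this
  exact integral_congr_ae (Filter.Eventually.of_forall fun y => (this y).symm)

end s3


lemma lpKer_shift_integrable {c : ℝ} (hc : 0 < c) (x : EuclideanSpace ℝ (Fin 2)) :
    Integrable (fun y : EuclideanSpace ℝ (Fin 2) => lpKer c (dist x y)) := by
  have h0 : Integrable (fun y : EuclideanSpace ℝ (Fin 2) => lpKer c ‖y‖) :=
    eucl_radial_integrable _ (radial_integrable _ (integrableOn_mul_lpKer hc))
  have h1 := h0.comp_sub_right x
  have heq : (fun y : EuclideanSpace ℝ (Fin 2) => lpKer c (dist x y))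
      = fun y => lpKer c ‖y - x‖ := by
    funext y; rw [dist_comm, dist_eq_norm]
  rw [heq]; exact h1

lemma lpKer_shift_integral {c : ℝ} (hc : 0 < c) (x : EuclideanSpace ℝ (Fin 2)) :
    ∫ y : EuclideanSpace ℝ (Fin 2), lpKer c (dist x y) = π * c ^ 2 / 2 := by
  have heq : (fun y : EuclideanSpace ℝ (Fin 2) => lpKer c (dist x y))
      = fun y => lpKer c ‖y - x‖ := by
    funext y; rw [dist_comm, dist_eq_norm]
  rw [heq]
  rw [integral_sub_right_eq_self (fun y : EuclideanSpace ℝ (Fin 2) => lpKer c ‖y‖) x]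
  rw [eucl_radial_integral, radial_integral, integral_mul_lpKer hc]
  ring

/-- Logarithmic-potential bound obtained from the rearrangement lemma with kernel
`g(s) = ln(d/s) 1_{s ≤ d}`. -/
theorem log_potential_bound
    (M γ d R₀ : ℝ) (hM : 0 < M) (hγ : 0 < γ) (hd : 0 < d)
    (hR₀ : R₀ = Real.sqrt (γ / (π * M))) (hR₀d : R₀ ≤ d)
    (x : EuclideanSpace ℝ (Fin 2))
    (f : EuclideanSpace ℝ (Fin 2) → ℝ)
    (hfmeas : Measurable f)
    (hfbound : ∀ᵐ y ∂(volume), 0 ≤ f y ∧ f y ≤ M)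
    (hfmass : (∫ y, f y) = γ) :
    ∫ y in Metric.ball x d, Real.log (d / dist x y) * f y
      ≤ γ * (Real.log (d / R₀) + 1 / 2) := by
  have hπ := Real.pi_pos
  have hR0pos : 0 < R₀ := by
    rw [hR₀]; exact Real.sqrt_pos.2 (div_pos hγ (mul_pos hπ hM))
  have hmass : π * M * R₀ ^ 2 = γ := by
    rw [hR₀, Real.sq_sqrt (le_of_lt (div_pos hγ (mul_pos hπ hM)))]
    field_simp
  have hfint : Integrable f := by
    by_contra h
    rw [integral_undef h] at hfmass
    exact hγ.ne' hfmass.symm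
  have hlogdR : 0 ≤ Real.log (d / R₀) := Real.log_nonneg ((one_le_div hR0pos).2 hR₀d)
  have hKD : Integrable (fun y : EuclideanSpace ℝ (Fin 2) => lpKer d (dist x y)) :=
    lpKer_shift_integrable hd x
  have hKR : Integrable (fun y : EuclideanSpace ℝ (Fin 2) => lpKer R₀ (dist x y)) :=
    lpKer_shift_integrable hR0pos x
  have hdistmeas : Measurable (fun y : EuclideanSpace ℝ (Fin 2) => dist x y) :=
    measurable_const.dist measurable_id
  have hbound_ae : ∀ᵐ y ∂(volume.restrict (Metric.ball x d)), 0 ≤ f y ∧ f y ≤ M :=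
    ae_restrict_of_ae hfbound
  have hmem_ae : ∀ᵐ y ∂(volume.restrict (Metric.ball x d)), y ∈ Metric.ball x d :=
    ae_restrict_mem Metric.isOpen_ball.measurableSet
  -- integrability of the left-hand side
  have hLHSint : IntegrableOn (fun y => Real.log (d / dist x y) * f y) (Metric.ball x d) := by
    refine Integrable.mono' ((hKD.const_mul M).integrableOn) ?_ ?_
    · exact ((Real.measurable_log.comp (measurable_const.div hdistmeas)).mul
        hfmeas).aestronglyMeasurable
    · filter_upwards [hbound_ae, hmem_ae] with y hy hmem
      have hsd : dist x y < d := by rw [dist_comm]; exact Metric.mem_ball.1 hmem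
      have h1 : |Real.log (d / dist x y)| ≤ lpKer d (dist x y) := by
        rcases eq_or_lt_of_le (dist_nonneg : 0 ≤ dist x y) with h0 | h0
        · rw [← h0]
          simp [lpKer, hd]
        · have : 0 ≤ Real.log (d / dist x y) :=
            Real.log_nonneg ((one_le_div h0).2 hsd.le)
          rw [abs_of_nonneg this, lpKer, if_pos hsd]
      have h2 : |f y| ≤ M := by rw [abs_of_nonneg hy.1]; exact hy.2
      calc ‖Real.log (d / dist x y) * f y‖
          = |Real.log (d / dist x y)| * |f y| := abs_mul _ _
        _ ≤ lpKer d (dist x y) * M :=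
            mul_le_mul h1 h2 (abs_nonneg _) (lpKer_nonneg dist_nonneg)
        _ = M * lpKer d (dist x y) := mul_comm _ _
  -- integrability of the right-hand side
  have hRHS1 : IntegrableOn (fun y => Real.log (d / R₀) * f y) (Metric.ball x d) :=
    (hfint.const_mul _).integrableOn
  have hRHS2 : IntegrableOn (fun y => M * lpKer R₀ (dist x y)) (Metric.ball x d) :=
    (hKR.const_mul M).integrableOn
  -- pointwise bound
  have hptwise : ∀ᵐ y ∂(volume.restrict (Metric.ball x d)),
      Real.log (d / dist x y) * f y
        ≤ Real.log (d / R₀) * f y + M * lpKer R₀ (dist x y) := by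
    filter_upwards [hbound_ae, hmem_ae] with y hy hmem
    rcases eq_or_lt_of_le (dist_nonneg : 0 ≤ dist x y) with h0 | h0
    · rw [← h0]
      simp only [div_zero, Real.log_zero, zero_mul]
      have hker0 : lpKer R₀ 0 = 0 := by simp [lpKer, hR0pos]
      rw [hker0, mul_zero, add_zero]
      exact mul_nonneg hlogdR hy.1
    · by_cases hsR : dist x y < R₀
      · have hsplit : Real.log (d / dist x y)
            = Real.log (d / R₀) + Real.log (R₀ / dist x y) := by
          rw [Real.log_div hd.ne' h0.ne', Real.log_div hR0pos.ne' h0.ne',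
            Real.log_div hd.ne' hR0pos.ne']
          ring
        rw [hsplit, add_mul, lpKer, if_pos hsR]
        have hlog2 : 0 ≤ Real.log (R₀ / dist x y) :=
          Real.log_nonneg ((one_le_div h0).2 hsR.le)
        have : Real.log (R₀ / dist x y) * f y ≤ M * Real.log (R₀ / dist x y) := by
          rw [mul_comm M]
          exact mul_le_mul_of_nonneg_left hy.2 hlog2
        linarith
      · rw [lpKer, if_neg hsR, mul_zero, add_zero]
        have hlog3 : Real.log (d / dist x y) ≤ Real.log (d / R₀) := by
          apply Real.log_le_log (div_pos hd h0)
          exact div_le_div_of_nonneg_left hd.le hR0pos (not_lt.1 hsR)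
        exact mul_le_mul_of_nonneg_right hlog3 hy.1
  -- set integral of the shifted small kernel
  have hKRval : ∫ y in Metric.ball x d, lpKer R₀ (dist x y) = π * R₀ ^ 2 / 2 := by
    rw [setIntegral_eq_integral_of_forall_compl_eq_zero ?_]
    · exact lpKer_shift_integral hR0pos x
    · intro y hy
      have : d ≤ dist x y := by
        rw [dist_comm]
        exact not_lt.1 (fun hlt => hy (Metric.mem_ball.1 hlt |> fun _ => Metric.mem_ball.2 hlt))
      rw [lpKer, if_neg (not_lt.2 (le_trans hR₀d this))]
  have hballf : ∫ y in Metric.ball x d, f y ≤ γ := by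
    rw [← hfmass]
    exact setIntegral_le_integral hfint (hfbound.mono fun y h => h.1)
  calc ∫ y in Metric.ball x d, Real.log (d / dist x y) * f y
      ≤ ∫ y in Metric.ball x d,
          (Real.log (d / R₀) * f y + M * lpKer R₀ (dist x y)) :=
        integral_mono_ae hLHSint (hRHS1.add hRHS2) hptwise
    _ = Real.log (d / R₀) * (∫ y in Metric.ball x d, f y)
          + M * ∫ y in Metric.ball x d, lpKer R₀ (dist x y) := by
        rw [integral_add hRHS1 hRHS2, integral_const_mul, integral_const_mul]
    _ ≤ Real.log (d / R₀) * γ + M * (π * R₀ ^ 2 / 2) := by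
        have := mul_le_mul_of_nonneg_left hballf hlogdR
        rw [hKRval]
        linarith
    _ = γ * (Real.log (d / R₀) + 1 / 2) := by
        linear_combination hmass / 2
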